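/- Consider a finite recurrent MDP on S that is skip-free in the negative direction on the tree, and fix x ∈ ℝ. Define y_i ∈ ℝ and a_i ∈ A for all i ≠ 0 by downward recursion on the tree: y_i = min_{a∈A} (c_i(a) − x + ∑_{k∈D(i)} p̄_{ik}(a) y_k)/p_{iρ(i)}(a), with a_i an action attaining this minimum (the sum being empty when D(i) = ∅). Then for every stationary deterministic policy d' and every i ≠ 0, the expected x-revised first-passage cost from i to ρ(i) under d' is at least y_i; any policy d with d(i) = a_i for all i ≠ 0 achieves expected x-revised first-passage cost exactly y_i from i to ρ(i) for every i ≠ 0; and consequently the minimal (over stationary deterministic policies) expected x-revised cost until first passage from i to state 0 equals ∑_{k∈Δ(0,i)} y_k. -/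

import Mathlib

open Finset Filter

noncomputable section

/-- A rooted tree structure on a state space `S`: a root, a parent map fixing the root,
such that iterating the parent map from any state reaches the root. -/
structure SFTree (S : Type*) where
  root : S
  parent : S → S
  parent_root : parent root = root
  reaches_root : ∀ i : S, ∃ n : ℕ, parent^[n] i = root

namespace SFTree

variable {S : Type*} [Fintype S] [DecidableEq S]

open Classical in
/-- The set of descendants of `i`: states `j ≠ i` whose path to the root passes through `i`. -/
def desc (T : SFTree S) (i : S) : Finset S :=
  Finset.univ.filter fun j => j ≠ i ∧ ∃ n : ℕ, T.parent^[n] j = i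

open Classical in
/-- The subtree rooted at `i`: `i` together with its descendants. -/
def subtree (T : SFTree S) (i : S) : Finset S :=
  Finset.univ.filter fun j => ∃ n : ℕ, T.parent^[n] j = i

open Classical in
/-- The states strictly after `i` on the path from `i` to `j`. -/
def delta (T : SFTree S) (i j : S) : Finset S :=
  Finset.univ.filter fun r =>
    r ≠ i ∧ (∃ n : ℕ, T.parent^[n] j = r) ∧ (∃ m : ℕ, T.parent^[m] r = i)

end SFTree

/-- A finite Markov decision process: costs and transition probabilities. -/
structure MDP (S A : Type*) [Fintype S] where
  c : S → A → ℝ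
  p : S → A → S → ℝ
  p_nonneg : ∀ i a j, 0 ≤ p i a j
  p_sum_one : ∀ i a, ∑ j, p i a j = 1

namespace MDP

variable {S A : Type*} [Fintype S] [DecidableEq S]

/-- Tail probability: the probability of jumping from `i` into the subtree rooted at `k`. -/
def ptail (M : MDP S A) (T : SFTree S) (i : S) (a : A) (k : S) : ℝ :=
  ∑ s ∈ T.subtree k, M.p i a s

/-- Skip-free in the negative direction on the tree `T`: from `i ≠ root` the only possible
transitions are to the parent of `i` or into the subtree rooted at `i`. -/
def IsSkipFree (M : MDP S A) (T : SFTree S) : Prop :=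
  ∀ i, i ≠ T.root → ∀ a j, M.p i a j ≠ 0 → j = T.parent i ∨ j ∈ T.subtree i

/-- Transition matrix of the stationary deterministic policy `d`. -/
def Pmat (M : MDP S A) (d : S → A) : Matrix S S ℝ :=
  Matrix.of fun i j => M.p i (d i) j

/-- Cost vector of the stationary deterministic policy `d`. -/
def cvec (M : MDP S A) (d : S → A) : S → ℝ := fun i => M.c i (d i)

/-- Expected average cost of the stationary deterministic policy `d` starting from `i`. -/
def avgCost (M : MDP S A) (d : S → A) (i : S) : ℝ :=
  Filter.limsup
    (fun n : ℕ => (n : ℝ)⁻¹ * ∑ t ∈ Finset.range n, ((M.Pmat d ^ t).mulVec (M.cvec d)) i)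
    Filter.atTop

end MDP

/-- A (substochastic) matrix is irreducible if every state can reach every other state
in a positive number of steps. -/
def MatIrreducible {S : Type*} [Fintype S] [DecidableEq S] (P : Matrix S S ℝ) : Prop :=
  ∀ i j, ∃ n : ℕ, 0 < n ∧ 0 < (P ^ n) i j

/-- A recurrent model: every stationary deterministic policy has an irreducible
transition matrix. -/
def IsRecurrentModel {S A : Type*} [Fintype S] [DecidableEq S] (M : MDP S A) : Prop :=
  ∀ d : S → A, MatIrreducible (M.Pmat d)

/-- The probability weight of a path of length `n`. -/
def pathWt {S : Type*} [Fintype S] (P : Matrix S S ℝ) {n : ℕ} (x : Fin (n + 1) → S) : ℝ :=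
  ∏ t : Fin n, P (x t.castSucc) (x t.succ)

open Classical in
/-- `E[f(X_n); τ > n]` for the chain with matrix `P` started at `z`, where `τ` is the
first-return epoch to `z` (the first time the chain enters `z` from a state `≠ z`). -/
def retTerm {S : Type*} [Fintype S] (P : Matrix S S ℝ) (z : S) (f : S → ℝ) (n : ℕ) : ℝ :=
  ∑ x ∈ Finset.univ.filter
      (fun (x : Fin (n + 1) → S) =>
        x 0 = z ∧ ∀ t : Fin n, ¬(x t.castSucc ≠ z ∧ x t.succ = z)),
    pathWt P x * f (x (Fin.last n))

/-- `E[∑_{t=0}^{τ-1} f(X_t)]` for the chain with matrix `P` started at `z`, where `τ` is the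
first-return epoch to `z`. -/
def retSum {S : Type*} [Fintype S] (P : Matrix S S ℝ) (z : S) (f : S → ℝ) : ℝ :=
  ∑' n : ℕ, retTerm P z f n

open Classical in
/-- `E[f(X_n); σ > n]` for the chain with matrix `P` started at `i`, where `σ` is the
first-passage epoch to `z`, `σ = min {t > 0 : X_t = z}`. -/
def passTerm {S : Type*} [Fintype S] (P : Matrix S S ℝ) (i z : S) (f : S → ℝ) (n : ℕ) : ℝ :=
  ∑ x ∈ Finset.univ.filter
      (fun (x : Fin (n + 1) → S) => x 0 = i ∧ ∀ t : Fin n, x t.succ ≠ z),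
    pathWt P x * f (x (Fin.last n))

/-- `E[∑_{t=0}^{σ-1} f(X_t)]` for the chain with matrix `P` started at `i`, where `σ` is the
first-passage epoch to `z`. -/
def passSum {S : Type*} [Fintype S] (P : Matrix S S ℝ) (i z : S) (f : S → ℝ) : ℝ :=
  ∑' n : ℕ, passTerm P i z f n

end
section TreeLemmas
set_option linter.unusedSectionVars false

namespace SFTree

variable {S : Type*} [Fintype S] [DecidableEq S] (T : SFTree S)

lemma iterate_root (n : ℕ) : T.parent^[n] T.root = T.root := by
  induction n with
  | zero => rfl
  | succ n ih => rw [Function.iterate_succ_apply', ih, T.parent_root]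

lemma eq_root_of_cycle {j : S} {n : ℕ} (hn : 0 < n) (h : T.parent^[n] j = j) :
    j = T.root := by
  obtain ⟨K, hK⟩ := T.reaches_root j
  have hmul : ∀ q, T.parent^[q * n] j = j := by
    intro q
    induction q with
    | zero => simp
    | succ q ih => rw [Nat.succ_mul, Function.iterate_add_apply, h, ih]
  have hKn : K ≤ K * n := Nat.le_mul_of_pos_right K hn
  have h1 : T.parent^[(K * n - K) + K] j = j := by
    rw [Nat.sub_add_cancel hKn]; exact hmul K
  rw [Function.iterate_add_apply, hK, iterate_root] at h1
  exact h1.symm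

lemma mem_subtree {i j : S} : j ∈ T.subtree i ↔ ∃ n : ℕ, T.parent^[n] j = i := by
  classical
  simp [SFTree.subtree]

lemma mem_desc {i j : S} : j ∈ T.desc i ↔ j ≠ i ∧ ∃ n : ℕ, T.parent^[n] j = i := by
  classical
  simp [SFTree.desc]

lemma mem_delta {i j r : S} : r ∈ T.delta i j ↔
    r ≠ i ∧ (∃ n : ℕ, T.parent^[n] j = r) ∧ (∃ m : ℕ, T.parent^[m] r = i) := by
  classical
  simp [SFTree.delta]

lemma mem_subtree_self (i : S) : i ∈ T.subtree i := (T.mem_subtree).2 ⟨0, rfl⟩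

lemma subtree_subset {i j : S} (h : j ∈ T.subtree i) : T.subtree j ⊆ T.subtree i := by
  intro l hl
  obtain ⟨n, hn⟩ := (T.mem_subtree).1 hl
  obtain ⟨m, hm⟩ := (T.mem_subtree).1 h
  exact (T.mem_subtree).2 ⟨m + n, by rw [Function.iterate_add_apply, hn, hm]⟩

lemma subtree_antisymm {i j : S} (h1 : j ∈ T.subtree i) (h2 : i ∈ T.subtree j) : i = j := by
  obtain ⟨n, hn⟩ := (T.mem_subtree).1 h1
  obtain ⟨m, hm⟩ := (T.mem_subtree).1 h2
  rcases Nat.eq_zero_or_pos (n + m) with h0 | hpos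
  · obtain ⟨rfl, rfl⟩ : n = 0 ∧ m = 0 := by omega
    simpa using hm
  · have hcyc : T.parent^[n + m] i = i := by
      rw [Function.iterate_add_apply, hm, hn]
    have := T.eq_root_of_cycle hpos hcyc
    subst this
    rw [← hm, iterate_root]

lemma ne_root_of_mem_subtree {i j : S} (hi : i ≠ T.root) (h : j ∈ T.subtree i) :
    j ≠ T.root := by
  rintro rfl
  obtain ⟨n, hn⟩ := (T.mem_subtree).1 h
  rw [iterate_root] at hn
  exact hi hn.symm

lemma parent_mem_subtree {i j : S} (h : j ∈ T.subtree i) (hne : j ≠ i) :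
    T.parent j ∈ T.subtree i := by
  obtain ⟨n, hn⟩ := (T.mem_subtree).1 h
  cases n with
  | zero => exact absurd hn hne
  | succ k =>
      rw [Function.iterate_succ_apply] at hn
      exact (T.mem_subtree).2 ⟨k, hn⟩

lemma parent_not_mem_subtree {j : S} (hj : j ≠ T.root) : T.parent j ∉ T.subtree j := by
  intro h
  obtain ⟨n, hn⟩ := (T.mem_subtree).1 h
  rw [← Function.iterate_succ_apply] at hn
  exact hj (T.eq_root_of_cycle (Nat.succ_pos n) hn)

lemma parent_ne_self {j : S} (hj : j ≠ T.root) : T.parent j ≠ j := by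
  intro h
  exact hj (T.eq_root_of_cycle Nat.one_pos (by simpa using h))

lemma desc_card_lt {j m : S} (h : m ∈ T.desc j) :
    (T.subtree m).card < (T.subtree j).card := by
  obtain ⟨hne, n, hn⟩ := (T.mem_desc).1 h
  have hm : m ∈ T.subtree j := (T.mem_subtree).2 ⟨n, hn⟩
  apply Finset.card_lt_card
  constructor
  · exact T.subtree_subset hm
  · intro hsub
    exact hne (T.subtree_antisymm hm (hsub (T.mem_subtree_self j))).symm

lemma delta_self (z : S) : T.delta z z = ∅ := by
  ext r
  simp only [Finset.notMem_empty, iff_false, T.mem_delta]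
  rintro ⟨hne, ⟨n, hn⟩, ⟨m, hm⟩⟩
  have hcyc : T.parent^[m + n] z = z := by rw [Function.iterate_add_apply, hn, hm]
  rcases Nat.eq_zero_or_pos (m + n) with h0 | hpos
  · obtain ⟨rfl, rfl⟩ : m = 0 ∧ n = 0 := by omega
    exact hne hn.symm
  · have hz := T.eq_root_of_cycle hpos hcyc
    subst hz
    rw [iterate_root] at hn
    exact hne hn.symm

lemma mem_delta_parent_self {i m : S} (hi : i ≠ T.root) (hm : m ∈ T.subtree i) :
    m ∈ T.delta (T.parent i) m := by
  obtain ⟨e, he⟩ := (T.mem_subtree).1 hm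
  refine (T.mem_delta).2 ⟨?_, ⟨0, rfl⟩, ⟨e + 1, ?_⟩⟩
  · rintro rfl
    exact T.parent_not_mem_subtree hi hm
  · rw [Function.iterate_succ_apply', he]

lemma not_mem_delta_parent {i m : S} (hi : i ≠ T.root) (hm : m ∈ T.subtree i) :
    m ∉ T.delta (T.parent i) (T.parent m) := by
  intro h
  obtain ⟨hne, ⟨n, hn⟩, _⟩ := (T.mem_delta).1 h
  rw [← Function.iterate_succ_apply] at hn
  exact T.ne_root_of_mem_subtree hi hm (T.eq_root_of_cycle (Nat.succ_pos n) hn)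

lemma delta_parent_step {i m : S} (hi : i ≠ T.root) (hm : m ∈ T.subtree i) :
    T.delta (T.parent i) m = insert m (T.delta (T.parent i) (T.parent m)) := by
  ext r
  simp only [Finset.mem_insert]
  constructor
  · intro h
    obtain ⟨hne, ⟨n, hn⟩, ⟨a, ha⟩⟩ := (T.mem_delta).1 h
    by_cases hrm : r = m
    · exact Or.inl hrm
    · cases n with
      | zero =>
          simp only [Function.iterate_zero, id_eq] at hn
          exact absurd hn.symm hrm
      | succ k =>
          rw [Function.iterate_succ_apply] at hn
          exact Or.inr ((T.mem_delta).2 ⟨hne, ⟨k, hn⟩, ⟨a, ha⟩⟩)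
  · rintro (rfl | h)
    · exact T.mem_delta_parent_self hi hm
    · obtain ⟨hne, ⟨n, hn⟩, ⟨a, ha⟩⟩ := (T.mem_delta).1 h
      refine (T.mem_delta).2 ⟨hne, ⟨n + 1, ?_⟩, ⟨a, ha⟩⟩
      rw [Function.iterate_add_apply]
      simpa using hn

lemma delta_parent_self' {i : S} (hi : i ≠ T.root) : T.delta (T.parent i) i = {i} := by
  rw [T.delta_parent_step hi (T.mem_subtree_self i), T.delta_self]
  rfl

lemma delta_disjoint {i m l : S} (hi : i ≠ T.root) (hm : m ∈ T.subtree i) :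
    Disjoint (T.delta (T.parent i) m) (T.delta m l) := by
  rw [Finset.disjoint_left]
  intro r h1 h2
  obtain ⟨_, ⟨n, hn⟩, _⟩ := (T.mem_delta).1 h1
  obtain ⟨hrm, _, ⟨b, hb⟩⟩ := (T.mem_delta).1 h2
  have hcyc : T.parent^[b + n] m = m := by rw [Function.iterate_add_apply, hn, hb]
  rcases Nat.eq_zero_or_pos (b + n) with h0 | hpos
  · obtain ⟨rfl, rfl⟩ : n = 0 ∧ b = 0 := by omega
    exact hrm hn.symm
  · exact T.ne_root_of_mem_subtree hi hm (T.eq_root_of_cycle hpos hcyc)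

lemma delta_union {i m l : S} (hi : i ≠ T.root) (hm : m ∈ T.subtree i)
    (hl : l ∈ T.subtree m) :
    T.delta (T.parent i) l = T.delta (T.parent i) m ∪ T.delta m l := by
  obtain ⟨c, hc⟩ := (T.mem_subtree).1 hl
  obtain ⟨e, he⟩ := (T.mem_subtree).1 hm
  have hmroot : m ≠ T.root := T.ne_root_of_mem_subtree hi hm
  ext r
  simp only [Finset.mem_union]
  constructor
  · intro h
    obtain ⟨hne, ⟨n, hn⟩, ⟨a, ha⟩⟩ := (T.mem_delta).1 h
    rcases le_or_gt c n with hcn | hnc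
    · left
      refine (T.mem_delta).2 ⟨hne, ⟨n - c, ?_⟩, ⟨a, ha⟩⟩
      rw [← hc, ← Function.iterate_add_apply]
      rw [Nat.sub_add_cancel hcn]
      exact hn
    · right
      have hrm : T.parent^[c - n] r = m := by
        rw [← hn, ← Function.iterate_add_apply]
        rw [Nat.sub_add_cancel hnc.le]
        exact hc
      refine (T.mem_delta).2 ⟨?_, ⟨n, hn⟩, ⟨c - n, hrm⟩⟩
      rintro rfl
      exact hmroot (T.eq_root_of_cycle (by omega) hrm)
  · rintro (h | h)
    · obtain ⟨hne, ⟨n, hn⟩, ⟨a, ha⟩⟩ := (T.mem_delta).1 h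
      exact (T.mem_delta).2 ⟨hne, ⟨n + c, by rw [Function.iterate_add_apply, hc, hn]⟩, ⟨a, ha⟩⟩
    · obtain ⟨hrm, ⟨n, hn⟩, ⟨b, hb⟩⟩ := (T.mem_delta).1 h
      have hz : T.parent^[(e + 1) + b] r = T.parent i := by
        rw [Function.iterate_add_apply, hb, Function.iterate_succ_apply', he]
      refine (T.mem_delta).2 ⟨?_, ⟨n, hn⟩, ⟨(e + 1) + b, hz⟩⟩
      rintro rfl
      have : m = T.root := by
        have hr := T.eq_root_of_cycle (n := (e + 1) + b) (by omega) hz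
        rw [← hb, hr, iterate_root]
      exact hmroot this

lemma delta_eq_filter (m l : S) :
    T.delta m l = (T.desc m).filter (fun k => l ∈ T.subtree k) := by
  classical
  ext r
  simp only [Finset.mem_filter, T.mem_delta, T.mem_desc, T.mem_subtree]
  tauto

lemma mem_subtree_of_mem_delta {z m r : S} (h : r ∈ T.delta z m) (hm : m ∈ T.subtree z → True) :
    True := trivial

lemma exists_root_child {i : S} (hi : i ≠ T.root) :
    ∃ t : S, t ≠ T.root ∧ T.parent t = T.root ∧ i ∈ T.subtree t := by
  classical
  have hex : ∃ n : ℕ, T.parent^[n] i = T.root := T.reaches_root i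
  let K := Nat.find hex
  have hK : T.parent^[K] i = T.root := Nat.find_spec hex
  have hKpos : 0 < K := by
    rcases Nat.eq_zero_or_pos K with h0 | h
    · exfalso; apply hi; rw [← hK, h0]; rfl
    · exact h
  refine ⟨T.parent^[K - 1] i, ?_, ?_, (T.mem_subtree).2 ⟨K - 1, rfl⟩⟩
  · intro hroot
    exact Nat.find_min hex (m := K - 1) (by omega) hroot
  · have h2 : T.parent^[(K - 1) + 1] i = T.root := by
      have : K - 1 + 1 = K := by omega
      rw [this, hK]
    rw [Function.iterate_succ_apply'] at h2
    exact h2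

end SFTree

end TreeLemmas
section MatrixLemmas
set_option linter.unusedSectionVars false

variable {S : Type*} [Fintype S] [DecidableEq S]

/-- The taboo transition matrix: `P` with column `z` set to zero. -/
def Qmat (P : Matrix S S ℝ) (z : S) : Matrix S S ℝ :=
  Matrix.of fun j k => if k = z then 0 else P j k

lemma Qmat_apply (P : Matrix S S ℝ) (z j k : S) :
    Qmat P z j k = if k = z then 0 else P j k := rfl

variable {P : Matrix S S ℝ} {z : S}

lemma Qmat_nonneg (hP0 : ∀ i j, 0 ≤ P i j) (j k : S) : 0 ≤ Qmat P z j k := by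
  rw [Qmat_apply]; split
  · exact le_refl 0
  · exact hP0 j k

lemma Qmat_le (hP0 : ∀ i j, 0 ≤ P i j) (j k : S) : Qmat P z j k ≤ P j k := by
  rw [Qmat_apply]; split
  · exact hP0 j k
  · exact le_refl _

lemma pow_entry_nonneg {A : Matrix S S ℝ} (hA : ∀ j k, 0 ≤ A j k) (n : ℕ) (j k : S) :
    0 ≤ (A ^ n) j k := by
  induction n generalizing j k with
  | zero => simp [Matrix.one_apply]; split <;> norm_num
  | succ n ih =>
      rw [pow_succ, Matrix.mul_apply]
      exact Finset.sum_nonneg fun l _ => mul_nonneg (ih j l) (hA l k)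

lemma pow_entry_le {A B : Matrix S S ℝ} (hA : ∀ j k, 0 ≤ A j k)
    (hAB : ∀ j k, A j k ≤ B j k) (n : ℕ) (j k : S) : (A ^ n) j k ≤ (B ^ n) j k := by
  have hB : ∀ j k, 0 ≤ B j k := fun j k => le_trans (hA j k) (hAB j k)
  induction n generalizing j k with
  | zero => simp
  | succ n ih =>
      rw [pow_succ, pow_succ, Matrix.mul_apply, Matrix.mul_apply]
      refine Finset.sum_le_sum fun l _ => ?_
      exact mul_le_mul (ih j l) (hAB l k) (hA l k)
        (le_trans (pow_entry_nonneg hA n j l) (ih j l))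

lemma rowsum_one (j : S) : ∑ k, (1 : Matrix S S ℝ) j k = 1 := by
  simp [Matrix.one_apply]

lemma rowsum_P_pow (hP0 : ∀ i j, 0 ≤ P i j) (hP1 : ∀ i, ∑ j, P i j = 1) (n : ℕ) (j : S) :
    ∑ k, (P ^ n) j k = 1 := by
  induction n generalizing j with
  | zero => exact rowsum_one j
  | succ n ih =>
      rw [pow_succ']
      simp only [Matrix.mul_apply]
      rw [Finset.sum_comm]
      have h : ∀ l, (∑ k, P j l * (P ^ n) l k) = P j l := fun l => by
        rw [← Finset.mul_sum, ih l, mul_one]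
      rw [Finset.sum_congr rfl fun l _ => h l]
      exact hP1 j

lemma rowsum_Q_pow_le_one (hP0 : ∀ i j, 0 ≤ P i j) (hP1 : ∀ i, ∑ j, P i j = 1) (n : ℕ)
    (j : S) : ∑ k, (Qmat P z ^ n) j k ≤ 1 := by
  induction n generalizing j with
  | zero => rw [pow_zero, rowsum_one]
  | succ n ih =>
      rw [pow_succ']
      simp only [Matrix.mul_apply]
      rw [Finset.sum_comm]
      have h : ∀ l, (∑ k, Qmat P z j l * (Qmat P z ^ n) l k)
          = Qmat P z j l * ∑ k, (Qmat P z ^ n) l k := fun l => (Finset.mul_sum _ _ _).symm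
      rw [Finset.sum_congr rfl fun l _ => h l]
      calc (∑ l, Qmat P z j l * ∑ k, (Qmat P z ^ n) l k)
          ≤ ∑ l, P j l * 1 := by
            refine Finset.sum_le_sum fun l _ => ?_
            exact mul_le_mul (Qmat_le hP0 j l) (ih l)
              (Finset.sum_nonneg fun k _ =>
                pow_entry_nonneg (Qmat_nonneg hP0) n l k) (hP0 j l)
        _ = 1 := by simpa using hP1 j

lemma rowsum_Q_pow_add (n m : ℕ) (j : S) :
    ∑ k, (Qmat P z ^ (n + m)) j k
      = ∑ l, (Qmat P z ^ n) j l * ∑ k, (Qmat P z ^ m) l k := by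
  rw [pow_add]
  simp only [Matrix.mul_apply]
  rw [Finset.sum_comm]
  exact Finset.sum_congr rfl fun l _ => (Finset.mul_sum _ _ _).symm

lemma rowsum_Q_pow_mono (hP0 : ∀ i j, 0 ≤ P i j) (hP1 : ∀ i, ∑ j, P i j = 1) (n m : ℕ)
    (j : S) : ∑ k, (Qmat P z ^ (n + m)) j k ≤ ∑ k, (Qmat P z ^ n) j k := by
  rw [rowsum_Q_pow_add]
  calc (∑ l, (Qmat P z ^ n) j l * ∑ k, (Qmat P z ^ m) l k)
      ≤ ∑ l, (Qmat P z ^ n) j l * 1 := by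
        refine Finset.sum_le_sum fun l _ => ?_
        exact mul_le_mul_of_nonneg_left (rowsum_Q_pow_le_one hP0 hP1 m l)
          (pow_entry_nonneg (Qmat_nonneg hP0) n j l)
    _ = ∑ k, (Qmat P z ^ n) j k := by simp

lemma Qmat_pow_col_zero (n : ℕ) (hn : 0 < n) (j : S) : (Qmat P z ^ n) j z = 0 := by
  obtain ⟨m, rfl⟩ := Nat.exists_eq_succ_of_ne_zero hn.ne'
  rw [pow_succ, Matrix.mul_apply]
  refine Finset.sum_eq_zero fun l _ => ?_
  rw [Qmat_apply, if_pos rfl, mul_zero]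

lemma exists_decay (hP0 : ∀ i j, 0 ≤ P i j) (hP1 : ∀ i, ∑ j, P i j = 1)
    (hirr : ∀ j : S, ∃ n : ℕ, 0 < n ∧ 0 < (P ^ n) j z) :
    ∃ (N : ℕ) (θ : ℝ), 0 < N ∧ 0 ≤ θ ∧ θ < 1 ∧
      ∀ (n : ℕ) (j : S), ∑ k, (Qmat P z ^ n) j k ≤ θ ^ (n / N) := by
  classical
  choose nn hnpos hnz using hirr
  set N : ℕ := Finset.univ.sup nn + 1 with hN
  have hNpos : 0 < N := Nat.succ_pos _
  have hrsN : ∀ j, ∑ k, (Qmat P z ^ N) j k < 1 := by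
    intro j
    have hle : nn j ≤ N := le_trans (Finset.le_sup (Finset.mem_univ j)) (Nat.le_succ _)
    have h1 : ∑ k, (Qmat P z ^ N) j k ≤ ∑ k, (Qmat P z ^ nn j) j k := by
      have := rowsum_Q_pow_mono (z := z) hP0 hP1 (nn j) (N - nn j) j
      rwa [Nat.add_sub_cancel' hle] at this
    have h2 : ∑ k, (Qmat P z ^ nn j) j k ≤ 1 - (P ^ nn j) j z := by
      have hz0 : (Qmat P z ^ nn j) j z = 0 := Qmat_pow_col_zero _ (hnpos j) j
      have hQ : ∑ k ∈ Finset.univ.erase z, (Qmat P z ^ nn j) j k + (Qmat P z ^ nn j) j z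
          = ∑ k, (Qmat P z ^ nn j) j k := Finset.sum_erase_add _ _ (Finset.mem_univ z)
      have hPe : ∑ k ∈ Finset.univ.erase z, (P ^ nn j) j k + (P ^ nn j) j z
          = ∑ k, (P ^ nn j) j k := Finset.sum_erase_add _ _ (Finset.mem_univ z)
      have hPsum := rowsum_P_pow hP0 hP1 (nn j) j
      have hle2 : ∑ k ∈ Finset.univ.erase z, (Qmat P z ^ nn j) j k
          ≤ ∑ k ∈ Finset.univ.erase z, (P ^ nn j) j k :=
        Finset.sum_le_sum fun k _ =>
          pow_entry_le (Qmat_nonneg hP0) (Qmat_le hP0) (nn j) j k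
      linarith
    linarith [hnz j]
  have hne : (Finset.univ : Finset S).Nonempty := ⟨z, Finset.mem_univ z⟩
  set θ : ℝ := Finset.univ.sup' hne (fun j => ∑ k, (Qmat P z ^ N) j k) with hθ
  have hθlt : θ < 1 := (Finset.sup'_lt_iff hne).2 fun j _ => hrsN j
  have hθle : ∀ j, ∑ k, (Qmat P z ^ N) j k ≤ θ := fun j => by
    rw [hθ]
    exact Finset.le_sup' (fun j => ∑ k, (Qmat P z ^ N) j k) (Finset.mem_univ j)
  have hθ0 : 0 ≤ θ :=
    le_trans (Finset.sum_nonneg fun k _ =>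
      pow_entry_nonneg (Qmat_nonneg hP0) N z k) (hθle z)
  refine ⟨N, θ, hNpos, hθ0, hθlt, ?_⟩
  have hkey : ∀ (m : ℕ) (j : S), ∑ k, (Qmat P z ^ (N * m)) j k ≤ θ ^ m := by
    intro m
    induction m with
    | zero => intro j; simpa using rowsum_Q_pow_le_one (z := z) hP0 hP1 0 j
    | succ m ih =>
        intro j
        have : N * (m + 1) = N + N * m := by ring
        rw [this, rowsum_Q_pow_add]
        calc (∑ l, (Qmat P z ^ N) j l * ∑ k, (Qmat P z ^ (N * m)) l k)
            ≤ ∑ l, (Qmat P z ^ N) j l * θ ^ m := by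
              refine Finset.sum_le_sum fun l _ => ?_
              exact mul_le_mul_of_nonneg_left (ih l)
                (pow_entry_nonneg (Qmat_nonneg hP0) N j l)
          _ = (∑ l, (Qmat P z ^ N) j l) * θ ^ m := by rw [Finset.sum_mul]
          _ ≤ θ * θ ^ m :=
              mul_le_mul_of_nonneg_right (hθle j) (pow_nonneg hθ0 m)
          _ = θ ^ (m + 1) := by rw [pow_succ]; ring
  intro n j
  have hdm : N * (n / N) + n % N = n := Nat.div_add_mod n N
  calc ∑ k, (Qmat P z ^ n) j k
      = ∑ k, (Qmat P z ^ (N * (n / N) + n % N)) j k := by rw [hdm]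
    _ ≤ ∑ k, (Qmat P z ^ (N * (n / N))) j k := rowsum_Q_pow_mono hP0 hP1 _ _ j
    _ ≤ θ ^ (n / N) := hkey _ j

lemma summable_geom_div {θ : ℝ} (h0 : 0 ≤ θ) (h1 : θ < 1) {N : ℕ} (hN : 0 < N) :
    Summable (fun n : ℕ => θ ^ (n / N)) := by
  have hnn : ∀ n : ℕ, 0 ≤ θ ^ (n / N) := fun n => pow_nonneg h0 _
  refine summable_of_sum_range_le hnn (c := N * (1 - θ)⁻¹) fun M => ?_
  have hgrp : ∀ m : ℕ, ∑ n ∈ Finset.range (N * m), θ ^ (n / N)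
      = N * ∑ k ∈ Finset.range m, θ ^ k := by
    intro m
    induction m with
    | zero => simp
    | succ m ih =>
        have h1' : N * m ≤ N * (m + 1) := Nat.mul_le_mul_left _ (Nat.le_succ m)
        have hsplit : ∑ n ∈ Finset.range (N * (m + 1)), θ ^ (n / N)
            = ∑ n ∈ Finset.range (N * m), θ ^ (n / N)
              + ∑ n ∈ Finset.Ico (N * m) (N * (m + 1)), θ ^ (n / N) := by
          simp only [Finset.range_eq_Ico]
          rw [← Finset.sum_Ico_consecutive _ (Nat.zero_le _) h1']
        have hdiv : ∀ n ∈ Finset.Ico (N * m) (N * (m + 1)), θ ^ (n / N) = θ ^ m := by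
          intro n hn
          obtain ⟨hlo, hhi⟩ := Finset.mem_Ico.1 hn
          have hd : n / N = m := by
            apply Nat.div_eq_of_lt_le
            · rwa [Nat.mul_comm]
            · rwa [Nat.mul_comm] at hhi
          rw [hd]
        have hblock : ∑ n ∈ Finset.Ico (N * m) (N * (m + 1)), θ ^ (n / N) = N * θ ^ m := by
          rw [Finset.sum_congr rfl hdiv, Finset.sum_const, Nat.card_Ico, Nat.mul_succ,
            Nat.add_sub_cancel_left, nsmul_eq_mul]
        rw [hsplit, ih, hblock, Finset.sum_range_succ]
        ring
  have hsub : ∑ n ∈ Finset.range M, θ ^ (n / N) ≤ ∑ n ∈ Finset.range (N * M), θ ^ (n / N) := by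
    refine Finset.sum_le_sum_of_subset_of_nonneg ?_ (fun n _ _ => hnn n)
    exact Finset.range_subset_range.2 (by nlinarith [Nat.one_le_iff_ne_zero.2 hN.ne'])
  have hgeo : ∑ k ∈ Finset.range M, θ ^ k ≤ (1 - θ)⁻¹ := by
    have hsummable : Summable (fun k : ℕ => θ ^ k) := summable_geometric_of_lt_one h0 h1
    have := Summable.sum_le_tsum (Finset.range M) (fun k _ => pow_nonneg h0 k) hsummable
    rwa [tsum_geometric_of_lt_one h0 h1] at this
  calc ∑ n ∈ Finset.range M, θ ^ (n / N) ≤ N * ∑ k ∈ Finset.range M, θ ^ k := by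
        rw [← hgrp]; exact hsub
    _ ≤ N * (1 - θ)⁻¹ := by
        refine mul_le_mul_of_nonneg_left hgeo (by positivity)

lemma tendsto_geom_div {θ : ℝ} (h0 : 0 ≤ θ) (h1 : θ < 1) {N : ℕ} (hN : 0 < N) :
    Filter.Tendsto (fun n : ℕ => θ ^ (n / N)) Filter.atTop (nhds 0) := by
  have hdiv : Filter.Tendsto (fun n : ℕ => n / N) Filter.atTop Filter.atTop := by
    refine Filter.tendsto_atTop_atTop.2 fun b => ⟨b * N, fun n hn => ?_⟩
    exact (Nat.le_div_iff_mul_le hN).2 hn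
  exact (tendsto_pow_atTop_nhds_zero_of_lt_one h0 h1).comp hdiv

end MatrixLemmas
section PathLemmas
set_option linter.unusedSectionVars false

variable {S : Type*} [Fintype S] [DecidableEq S] (P : Matrix S S ℝ) (z : S) (f : S → ℝ)

lemma ite_inst {α : Sort*} (c : Prop) {h1 h2 : Decidable c} (a b : α) :
    @ite α c h1 a b = @ite α c h2 a b := by
  by_cases h : c
  · rw [if_pos h, if_pos h]
  · rw [if_neg h, if_neg h]

lemma passTerm_eq_sum_ite (i : S) (n : ℕ) :
    passTerm P i z f n = ∑ x : Fin (n + 1) → S,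
      (if x 0 = i ∧ ∀ t : Fin n, x t.succ ≠ z then pathWt P x * f (x (Fin.last n)) else 0) := by
  classical
  rw [passTerm, Finset.sum_filter]
  exact Finset.sum_congr rfl fun x _ => ite_inst _ _ _

lemma passTerm_zero (i : S) : passTerm P i z f 0 = f i := by
  classical
  rw [passTerm_eq_sum_ite]
  have hre := Equiv.sum_comp (Equiv.funUnique (Fin 1) S).symm
    (fun x : Fin 1 → S =>
      if x 0 = i ∧ ∀ t : Fin 0, x t.succ ≠ z then pathWt P x * f (x (Fin.last 0)) else 0)
  rw [← hre]
  have : ∀ s : S,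
      (if ((Equiv.funUnique (Fin 1) S).symm s) 0 = i
            ∧ ∀ t : Fin 0, ((Equiv.funUnique (Fin 1) S).symm s) t.succ ≠ z
        then pathWt P ((Equiv.funUnique (Fin 1) S).symm s)
          * f (((Equiv.funUnique (Fin 1) S).symm s) (Fin.last 0)) else 0)
      = (if s = i then f s else 0) := by
    intro s
    have h1 : ((Equiv.funUnique (Fin 1) S).symm s : Fin 1 → S) = fun _ => s := rfl
    rw [h1]
    have h2 : pathWt P (fun _ : Fin 1 => s) = 1 := by
      rw [pathWt]; exact Finset.prod_empty.trans rfl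
    simp [h2]
  rw [Finset.sum_congr rfl fun s _ => this s]
  simp

lemma passTerm_succ (i : S) (n : ℕ) :
    passTerm P i z f (n + 1) = ∑ j, Qmat P z i j * passTerm P j z f n := by
  classical
  rw [passTerm_eq_sum_ite]
  rw [← Equiv.sum_comp (Fin.consEquiv (fun _ : Fin (n + 2) => S))
    (fun x : Fin (n + 2) → S =>
      if x 0 = i ∧ ∀ t : Fin (n + 1), x t.succ ≠ z
        then pathWt P x * f (x (Fin.last (n + 1))) else 0)]
  rw [Fintype.sum_prod_type]
  have hterm : ∀ (a : S) (g : Fin (n + 1) → S),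
      (if (Fin.consEquiv (fun _ : Fin (n + 2) => S)) (a, g) 0 = i
            ∧ ∀ t : Fin (n + 1), (Fin.consEquiv (fun _ : Fin (n + 2) => S)) (a, g) t.succ ≠ z
        then pathWt P ((Fin.consEquiv (fun _ : Fin (n + 2) => S)) (a, g))
          * f ((Fin.consEquiv (fun _ : Fin (n + 2) => S)) (a, g) (Fin.last (n + 1))) else 0)
      = (if a = i ∧ ∀ t : Fin (n + 1), g t ≠ z
          then P a (g 0) * pathWt P g * f (g (Fin.last n)) else 0) := by
    intro a g
    have hce : ((Fin.consEquiv (fun _ : Fin (n + 2) => S)) (a, g) : Fin (n + 2) → S)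
        = Fin.cons a g := rfl
    rw [hce]
    have hcond : ((Fin.cons a g : Fin (n + 2) → S) 0 = i
          ∧ ∀ t : Fin (n + 1), (Fin.cons a g : Fin (n + 2) → S) t.succ ≠ z)
        ↔ (a = i ∧ ∀ t : Fin (n + 1), g t ≠ z) := by
      simp [Fin.cons_succ]
    have hlast : (Fin.cons a g : Fin (n + 2) → S) (Fin.last (n + 1)) = g (Fin.last n) := by
      rw [← Fin.succ_last, Fin.cons_succ]
    have hwt : pathWt P (Fin.cons a g) = P a (g 0) * pathWt P g := by
      rw [pathWt, Fin.prod_univ_succ]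
      have hf0 : P ((Fin.cons a g : Fin (n + 2) → S) (0 : Fin (n + 1)).castSucc)
          ((Fin.cons a g : Fin (n + 2) → S) (0 : Fin (n + 1)).succ) = P a (g 0) := by
        rw [Fin.castSucc_zero, Fin.cons_zero, Fin.cons_succ]
      have hrest : ∀ t : Fin n, P ((Fin.cons a g : Fin (n + 2) → S) t.succ.castSucc)
          ((Fin.cons a g : Fin (n + 2) → S) t.succ.succ) = P (g t.castSucc) (g t.succ) := by
        intro t
        rw [← Fin.succ_castSucc, Fin.cons_succ, Fin.cons_succ]
      rw [hf0, Finset.prod_congr rfl fun t _ => hrest t]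
      rfl
    rw [if_congr hcond (by rw [hwt, hlast]) rfl]
  rw [Finset.sum_congr rfl fun a _ => Finset.sum_congr rfl fun g _ => hterm a g]
  rw [Finset.sum_comm]
  have hcol : ∀ g : Fin (n + 1) → S,
      (∑ a, if a = i ∧ ∀ t : Fin (n + 1), g t ≠ z
          then P a (g 0) * pathWt P g * f (g (Fin.last n)) else 0)
      = (if ∀ t : Fin (n + 1), g t ≠ z
          then P i (g 0) * pathWt P g * f (g (Fin.last n)) else 0) := by
    intro g
    by_cases hc : ∀ t : Fin (n + 1), g t ≠ z
    · rw [if_pos hc]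
      rw [Finset.sum_congr rfl (fun a _ => by rw [if_congr (and_iff_left hc) rfl rfl])]
      rw [Finset.sum_ite_eq' Finset.univ i
        (fun a => P a (g 0) * pathWt P g * f (g (Fin.last n)))]
      exact if_pos (Finset.mem_univ i)
    · rw [if_neg hc]
      refine Finset.sum_eq_zero fun a _ => ?_
      rw [if_neg (by tauto)]
  rw [Finset.sum_congr rfl fun g _ => hcol g]
  -- now RHS
  have hrhs : ∀ j, Qmat P z i j * passTerm P j z f n
      = ∑ g : Fin (n + 1) → S,
          (if g 0 = j ∧ ∀ t : Fin n, g t.succ ≠ z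
            then Qmat P z i j * (pathWt P g * f (g (Fin.last n))) else 0) := by
    intro j
    rw [passTerm_eq_sum_ite, Finset.mul_sum]
    exact Finset.sum_congr rfl fun g _ => by rw [mul_ite, mul_zero]
  rw [Finset.sum_congr rfl fun j _ => hrhs j, Finset.sum_comm]
  refine Finset.sum_congr rfl fun g _ => ?_
  have hcol2 : (∑ j, if g 0 = j ∧ ∀ t : Fin n, g t.succ ≠ z
        then Qmat P z i j * (pathWt P g * f (g (Fin.last n))) else 0)
      = (if ∀ t : Fin n, g t.succ ≠ z
          then Qmat P z i (g 0) * (pathWt P g * f (g (Fin.last n))) else 0) := by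
    by_cases hc : ∀ t : Fin n, g t.succ ≠ z
    · rw [if_pos hc]
      rw [Finset.sum_congr rfl (fun j _ => by rw [if_congr (and_iff_left hc) rfl rfl])]
      rw [Finset.sum_ite_eq Finset.univ (g 0)
        (fun j => Qmat P z i j * (pathWt P g * f (g (Fin.last n))))]
      exact if_pos (Finset.mem_univ (g 0))
    · rw [if_neg hc]
      refine Finset.sum_eq_zero fun j _ => ?_
      rw [if_neg (by tauto)]
  rw [hcol2]
  have hiff : (∀ t : Fin (n + 1), g t ≠ z) ↔ (g 0 ≠ z ∧ ∀ t : Fin n, g t.succ ≠ z) :=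
    Fin.forall_fin_succ
  by_cases hz : g 0 = z
  · rw [if_neg (fun h => (hiff.1 h).1 hz)]
    by_cases hc : ∀ t : Fin n, g t.succ ≠ z
    · rw [if_pos hc, Qmat_apply, if_pos hz, zero_mul]
    · rw [if_neg hc]
  · by_cases hc : ∀ t : Fin n, g t.succ ≠ z
    · rw [if_pos (hiff.2 ⟨hz, hc⟩), if_pos hc, Qmat_apply, if_neg hz, mul_assoc]
    · rw [if_neg (fun h => hc (hiff.1 h).2), if_neg hc]

lemma passTerm_eq_mulVec (i : S) (n : ℕ) :
    passTerm P i z f n = ((Qmat P z ^ n).mulVec f) i := by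
  induction n generalizing i with
  | zero => rw [passTerm_zero, pow_zero, Matrix.one_mulVec]
  | succ n ih =>
      rw [passTerm_succ]
      calc (∑ j, Qmat P z i j * passTerm P j z f n)
          = ∑ j, Qmat P z i j * ((Qmat P z ^ n).mulVec f) j :=
            Finset.sum_congr rfl fun j _ => by rw [ih j]
        _ = ((Qmat P z).mulVec ((Qmat P z ^ n).mulVec f)) i := rfl
        _ = ((Qmat P z ^ (n + 1)).mulVec f) i := by
            rw [Matrix.mulVec_mulVec, ← pow_succ']

lemma passTerm_abs_le (hP0 : ∀ i j, 0 ≤ P i j) (i : S) (n : ℕ) {C : ℝ}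
    (hC : ∀ k, |f k| ≤ C) :
    |passTerm P i z f n| ≤ (∑ k, (Qmat P z ^ n) i k) * C := by
  rw [passTerm_eq_mulVec]
  have h1 : ((Qmat P z ^ n).mulVec f) i = ∑ k, (Qmat P z ^ n) i k * f k := rfl
  rw [h1]
  calc |∑ k, (Qmat P z ^ n) i k * f k| ≤ ∑ k, |(Qmat P z ^ n) i k * f k| :=
        Finset.abs_sum_le_sum_abs _ _
    _ ≤ ∑ k, (Qmat P z ^ n) i k * C := by
        refine Finset.sum_le_sum fun k _ => ?_
        rw [abs_mul, abs_of_nonneg (pow_entry_nonneg (Qmat_nonneg hP0) n i k)]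
        exact mul_le_mul_of_nonneg_left (hC k) (pow_entry_nonneg (Qmat_nonneg hP0) n i k)
    _ = (∑ k, (Qmat P z ^ n) i k) * C := (Finset.sum_mul _ _ _).symm

end PathLemmas
section FixLemmas
set_option linter.unusedSectionVars false

variable {S : Type*} [Fintype S] [DecidableEq S] {P : Matrix S S ℝ} {z : S} (f : S → ℝ)

lemma abs_le_sup (i : S) : ∀ k, |f k| ≤ Finset.univ.sup' ⟨i, Finset.mem_univ i⟩
    (fun k => |f k|) := fun k => Finset.le_sup' (fun k => |f k|) (Finset.mem_univ k)

lemma summable_passTerm (hP0 : ∀ i j, 0 ≤ P i j) (hP1 : ∀ i, ∑ j, P i j = 1)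
    (hirr : ∀ j : S, ∃ n : ℕ, 0 < n ∧ 0 < (P ^ n) j z) (i : S) :
    Summable (fun n => passTerm P i z f n) := by
  obtain ⟨N, θ, hN, hθ0, hθ1, hdecay⟩ := exists_decay hP0 hP1 hirr
  set C := Finset.univ.sup' ⟨i, Finset.mem_univ i⟩ (fun k => |f k|) with hC
  have hC0 : 0 ≤ C := le_trans (abs_nonneg _) (abs_le_sup f i i)
  refine Summable.of_norm_bounded (g := fun n => θ ^ (n / N) * C)
    ((summable_geom_div hθ0 hθ1 hN).mul_right C) fun n => ?_
  rw [Real.norm_eq_abs]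
  calc |passTerm P i z f n| ≤ (∑ k, (Qmat P z ^ n) i k) * C :=
        passTerm_abs_le P z f hP0 i n (abs_le_sup f i)
    _ ≤ θ ^ (n / N) * C := mul_le_mul_of_nonneg_right (hdecay n i) hC0

lemma passSum_step (hP0 : ∀ i j, 0 ≤ P i j) (hP1 : ∀ i, ∑ j, P i j = 1)
    (hirr : ∀ j : S, ∃ n : ℕ, 0 < n ∧ 0 < (P ^ n) j z) (i : S) :
    passSum P i z f = f i + ∑ j, Qmat P z i j * passSum P j z f := by
  rw [passSum, Summable.tsum_eq_zero_add (summable_passTerm f hP0 hP1 hirr i), passTerm_zero]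
  congr 1
  calc (∑' n : ℕ, passTerm P i z f (n + 1))
      = ∑' n : ℕ, ∑ j, Qmat P z i j * passTerm P j z f n :=
        tsum_congr fun n => passTerm_succ P z f i n
    _ = ∑ j, ∑' n : ℕ, Qmat P z i j * passTerm P j z f n :=
        Summable.tsum_finsetSum fun j _ => (summable_passTerm f hP0 hP1 hirr j).mul_left _
    _ = ∑ j, Qmat P z i j * passSum P j z f := by
        refine Finset.sum_congr rfl fun j _ => ?_
        rw [tsum_mul_left, passSum]

lemma fixed_point_unique (hP0 : ∀ i j, 0 ≤ P i j) (hP1 : ∀ i, ∑ j, P i j = 1)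
    (hirr : ∀ j : S, ∃ n : ℕ, 0 < n ∧ 0 < (P ^ n) j z)
    (B : Finset S) (v w : S → ℝ)
    (hv : ∀ m ∈ B, v m = f m + ∑ l, Qmat P z m l * v l)
    (hw : ∀ m ∈ B, w m = f m + ∑ l, Qmat P z m l * w l)
    (hagree : ∀ m ∉ B, v m = w m) : ∀ m, v m = w m := by
  classical
  obtain ⟨N, θ, hN, hθ0, hθ1, hdecay⟩ := exists_decay hP0 hP1 hirr
  set e : S → ℝ := fun m => v m - w m with he
  set Q' : Matrix S S ℝ := Matrix.of fun m l => if m ∈ B then Qmat P z m l else 0 with hQ'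
  have hQ'app : ∀ m l, Q' m l = if m ∈ B then Qmat P z m l else 0 := fun m l => rfl
  have hQ'0 : ∀ m l, 0 ≤ Q' m l := by
    intro m l; rw [hQ'app]; split
    · exact Qmat_nonneg hP0 m l
    · exact le_refl 0
  have hQ'le : ∀ m l, Q' m l ≤ Qmat P z m l := by
    intro m l; rw [hQ'app]; split
    · exact le_refl _
    · exact Qmat_nonneg hP0 m l
  have hstep : ∀ m, e m = ∑ l, Q' m l * e l := by
    intro m
    by_cases hm : m ∈ B
    · have h1 : ∑ l, Q' m l * e l
          = ∑ l, (Qmat P z m l * v l - Qmat P z m l * w l) := by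
        refine Finset.sum_congr rfl fun l _ => ?_
        rw [hQ'app, if_pos hm, he]
        ring
      rw [h1, Finset.sum_sub_distrib, he]
      have := hv m hm
      have := hw m hm
      simp only []
      linarith [hv m hm, hw m hm]
    · have h1 : ∑ l, Q' m l * e l = 0 := by
        refine Finset.sum_eq_zero fun l _ => ?_
        rw [hQ'app, if_neg hm, zero_mul]
      rw [h1, he]
      simp [hagree m hm]
  have hiter : ∀ (n : ℕ) (m : S), e m = ((Q' ^ n).mulVec e) m := by
    intro n
    induction n with
    | zero => intro m; rw [pow_zero, Matrix.one_mulVec]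
    | succ n ih =>
        intro m
        rw [hstep m]
        calc (∑ l, Q' m l * e l) = ∑ l, Q' m l * ((Q' ^ n).mulVec e) l :=
              Finset.sum_congr rfl fun l _ => by rw [← ih l]
          _ = (Q'.mulVec ((Q' ^ n).mulVec e)) m := rfl
          _ = ((Q' ^ (n + 1)).mulVec e) m := by rw [Matrix.mulVec_mulVec, ← pow_succ']
  intro m
  have hnem : (Finset.univ : Finset S).Nonempty := ⟨m, Finset.mem_univ m⟩
  set C := Finset.univ.sup' hnem (fun l => |e l|) with hCdef
  have hCle : ∀ l, |e l| ≤ C := fun l => by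
    rw [hCdef]; exact Finset.le_sup' (fun l => |e l|) (Finset.mem_univ l)
  have hC0 : 0 ≤ C := le_trans (abs_nonneg _) (hCle m)
  have hbound : ∀ n, |e m| ≤ θ ^ (n / N) * C := by
    intro n
    rw [hiter n m]
    have h1 : ((Q' ^ n).mulVec e) m = ∑ l, (Q' ^ n) m l * e l := rfl
    rw [h1]
    calc |∑ l, (Q' ^ n) m l * e l| ≤ ∑ l, |(Q' ^ n) m l * e l| :=
          Finset.abs_sum_le_sum_abs _ _
      _ ≤ ∑ l, (Qmat P z ^ n) m l * C := by
          refine Finset.sum_le_sum fun l _ => ?_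
          rw [abs_mul, abs_of_nonneg (pow_entry_nonneg hQ'0 n m l)]
          exact mul_le_mul (pow_entry_le hQ'0 hQ'le n m l) (hCle l) (abs_nonneg _)
            (pow_entry_nonneg (Qmat_nonneg hP0) n m l)
      _ = (∑ l, (Qmat P z ^ n) m l) * C := (Finset.sum_mul _ _ _).symm
      _ ≤ θ ^ (n / N) * C := mul_le_mul_of_nonneg_right (hdecay n m) hC0
  have htend : Filter.Tendsto (fun n : ℕ => θ ^ (n / N) * C) Filter.atTop (nhds 0) := by
    have := (tendsto_geom_div hθ0 hθ1 hN).mul_const C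
    simpa using this
  have hle0 : |e m| ≤ 0 := ge_of_tendsto htend (Filter.Eventually.of_forall hbound)
  have : e m = 0 := abs_eq_zero.1 (le_antisymm hle0 (abs_nonneg _))
  have : v m - w m = 0 := this
  linarith

end FixLemmas
section MainLemmas
set_option linter.unusedSectionVars false
set_option maxHeartbeats 1000000

variable {S A : Type*} [Fintype S] [DecidableEq S] [Fintype A] [Nonempty A]
  (T : SFTree S) (M : MDP S A)

lemma pmat_nonneg (d : S → A) : ∀ i j, 0 ≤ M.Pmat d i j := fun i j => M.p_nonneg i (d i) j

lemma pmat_sum_one (d : S → A) : ∀ i, ∑ j, M.Pmat d i j = 1 := fun i => M.p_sum_one i (d i)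

lemma pmat_irr (hrec : IsRecurrentModel M) (d : S → A) (z : S) :
    ∀ j : S, ∃ n : ℕ, 0 < n ∧ 0 < ((M.Pmat d) ^ n) j z := fun j => hrec d j z

lemma sum_subtree_eq (hsf : M.IsSkipFree T) (d : S → A) {m : S} (hm : m ≠ T.root) :
    ∑ l ∈ T.subtree m, M.Pmat d m l = 1 - M.Pmat d m (T.parent m) := by
  have h1 : ∑ l ∈ insert (T.parent m) (T.subtree m), M.Pmat d m l = 1 := by
    rw [← pmat_sum_one M d m]
    refine Finset.sum_subset (Finset.subset_univ _) fun l _ hl => ?_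
    by_contra hQ
    rcases hsf m hm (d m) l hQ with h | h
    · exact hl (Finset.mem_insert.2 (Or.inl h))
    · exact hl (Finset.mem_insert.2 (Or.inr h))
  rw [Finset.sum_insert (T.parent_not_mem_subtree hm)] at h1
  linarith

lemma swap_sum (d : S → A) (u : S → ℝ) (m : S) :
    ∑ l ∈ T.subtree m, M.Pmat d m l * (∑ k ∈ T.delta m l, u k)
      = ∑ k ∈ T.desc m, M.ptail T m (d m) k * u k := by
  classical
  have h1 : ∀ l, (∑ k ∈ T.delta m l, u k)
      = ∑ k ∈ T.desc m, (if l ∈ T.subtree k then u k else 0) := by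
    intro l
    rw [T.delta_eq_filter m l, Finset.sum_filter]
  calc ∑ l ∈ T.subtree m, M.Pmat d m l * (∑ k ∈ T.delta m l, u k)
      = ∑ l ∈ T.subtree m, ∑ k ∈ T.desc m,
          (if l ∈ T.subtree k then M.Pmat d m l * u k else 0) := by
        refine Finset.sum_congr rfl fun l _ => ?_
        rw [h1 l, Finset.mul_sum]
        exact Finset.sum_congr rfl fun k _ => by rw [mul_ite, mul_zero]
    _ = ∑ k ∈ T.desc m, ∑ l ∈ T.subtree m,
          (if l ∈ T.subtree k then M.Pmat d m l * u k else 0) := Finset.sum_comm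
    _ = ∑ k ∈ T.desc m, M.ptail T m (d m) k * u k := by
        refine Finset.sum_congr rfl fun k hk => ?_
        have hkm : k ∈ T.subtree m := by
          obtain ⟨hne, n, hn⟩ := (T.mem_desc).1 hk
          exact (T.mem_subtree).2 ⟨n, hn⟩
        rw [← Finset.sum_filter]
        have hfe : (T.subtree m).filter (fun l => l ∈ T.subtree k) = T.subtree k := by
          rw [Finset.filter_mem_eq_inter]
          exact Finset.inter_eq_right.2 (T.subtree_subset hkm)
        rw [hfe, ← Finset.sum_mul]
        rfl

/-- The combined decomposition (F2) and one-node recursion (F1) lemma,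
by strong induction on the subtree. -/
lemma F12 (hsf : M.IsSkipFree T) (hrec : IsRecurrentModel M)
    (x : ℝ) (d : S → A) :
    ∀ (n : ℕ) (j : S), (T.subtree j).card ≤ n → j ≠ T.root →
      ((∀ m ∈ T.subtree j,
        passSum (M.Pmat d) m (T.parent j) (fun s => M.cvec d s - x)
          = ∑ k ∈ T.delta (T.parent j) m,
              passSum (M.Pmat d) k (T.parent k) (fun s => M.cvec d s - x))
      ∧ (M.p j (d j) (T.parent j)
            * passSum (M.Pmat d) j (T.parent j) (fun s => M.cvec d s - x)
          = (M.c j (d j) - x) + ∑ k ∈ T.desc j, M.ptail T j (d j) k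
              * passSum (M.Pmat d) k (T.parent k) (fun s => M.cvec d s - x))) := by
  classical
  have hP0 := pmat_nonneg M d
  have hP1 := pmat_sum_one M d
  intro n
  induction n with
  | zero =>
      intro j hcard hj
      exfalso
      have := Finset.card_pos.2 ⟨j, T.mem_subtree_self j⟩
      omega
  | succ n ih =>
      intro j hcard hj
      have hznot : T.parent j ∉ T.subtree j := T.parent_not_mem_subtree hj
      -- abbreviations (as plain functions, no `set`, to keep rewriting predictable)
      have hF1m : ∀ m ∈ T.desc j,
          M.p m (d m) (T.parent m)
              * passSum (M.Pmat d) m (T.parent m) (fun s => M.cvec d s - x)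
            = (M.c m (d m) - x) + ∑ k ∈ T.desc m, M.ptail T m (d m) k
                * passSum (M.Pmat d) k (T.parent k) (fun s => M.cvec d s - x) := by
        intro m hm
        have hmlt := T.desc_card_lt hm
        have hmroot : m ≠ T.root := by
          obtain ⟨hne, nn, hn⟩ := (T.mem_desc).1 hm
          exact T.ne_root_of_mem_subtree hj ((T.mem_subtree).2 ⟨nn, hn⟩)
        exact (ih m (by omega) hmroot).2
      have hvfix : ∀ m, passSum (M.Pmat d) m (T.parent j) (fun s => M.cvec d s - x)
          = (M.cvec d m - x) + ∑ l, Qmat (M.Pmat d) (T.parent j) m l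
              * passSum (M.Pmat d) l (T.parent j) (fun s => M.cvec d s - x) :=
        fun m => passSum_step (fun s => M.cvec d s - x) hP0 hP1
          (pmat_irr M hrec d (T.parent j)) m
      set u : S → ℝ :=
        fun k => passSum (M.Pmat d) k (T.parent k) (fun s => M.cvec d s - x) with hudef
      set v : S → ℝ :=
        fun m => passSum (M.Pmat d) m (T.parent j) (fun s => M.cvec d s - x) with hvdef
      set w : S → ℝ :=
        fun m => if m ∈ T.subtree j then ∑ k ∈ T.delta (T.parent j) m, u k else v m
        with hwdef
      have hwval : ∀ m ∈ T.subtree j, w m = ∑ k ∈ T.delta (T.parent j) m, u k := by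
        intro m hm; rw [hwdef]; exact if_pos hm
      have huv : u j = v j := by rw [hudef, hvdef]
      have hagree : ∀ m ∉ T.desc j, v m = w m := by
        intro m hm
        by_cases hms : m ∈ T.subtree j
        · have hmj : m = j := by
            by_contra hne
            obtain ⟨nn, hn⟩ := (T.mem_subtree).1 hms
            exact hm ((T.mem_desc).2 ⟨hne, nn, hn⟩)
          subst hmj
          rw [hwval m (T.mem_subtree_self m), T.delta_parent_self' hj,
            Finset.sum_singleton, huv]
        · exact (if_neg hms).symm
      -- the fixed-point system for w on `desc j`
      have hwfix : ∀ m ∈ T.desc j, w m = (M.cvec d m - x)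
          + ∑ l, Qmat (M.Pmat d) (T.parent j) m l * w l := by
        intro m hm
        obtain ⟨hmnej, nn, hn⟩ := (T.mem_desc).1 hm
        have hms : m ∈ T.subtree j := (T.mem_subtree).2 ⟨nn, hn⟩
        have hmroot : m ≠ T.root := T.ne_root_of_mem_subtree hj hms
        have hparmem : T.parent m ∈ T.subtree j := T.parent_mem_subtree hms hmnej
        have hparne : T.parent m ∉ T.subtree m := T.parent_not_mem_subtree hmroot
        have hparnez : T.parent m ≠ T.parent j := fun h => hznot (h ▸ hparmem)
        have hsum1 : ∑ l, Qmat (M.Pmat d) (T.parent j) m l * w l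
            = ∑ l ∈ insert (T.parent m) (T.subtree m),
                Qmat (M.Pmat d) (T.parent j) m l * w l := by
          refine (Finset.sum_subset (Finset.subset_univ _) fun l _ hl => ?_).symm
          have hQ : Qmat (M.Pmat d) (T.parent j) m l = 0 := by
            rw [Qmat_apply]
            split
            · rfl
            · by_contra hPl
              rcases hsf m hmroot (d m) l hPl with h | h
              · exact hl (Finset.mem_insert.2 (Or.inl h))
              · exact hl (Finset.mem_insert.2 (Or.inr h))
          rw [hQ, zero_mul]
        have hdstep : ∑ k ∈ T.delta (T.parent j) m, u k
            = u m + ∑ k ∈ T.delta (T.parent j) (T.parent m), u k := by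
          rw [T.delta_parent_step hj hms, Finset.sum_insert (T.not_mem_delta_parent hj hms)]
        have hwl : ∀ l ∈ T.subtree m, Qmat (M.Pmat d) (T.parent j) m l * w l
            = M.Pmat d m l * ((∑ k ∈ T.delta (T.parent j) m, u k)
                + ∑ k ∈ T.delta m l, u k) := by
          intro l hl
          have hlj : l ∈ T.subtree j := T.subtree_subset hms hl
          have hlz : l ≠ T.parent j := fun h => hznot (h ▸ hlj)
          rw [Qmat_apply, if_neg hlz, hwval l hlj, T.delta_union hj hms hl,
            Finset.sum_union (T.delta_disjoint hj hms)]
        have hsum2 : ∑ l, Qmat (M.Pmat d) (T.parent j) m l * w l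
            = M.Pmat d m (T.parent m)
                * ((∑ k ∈ T.delta (T.parent j) m, u k) - u m)
              + ((1 - M.Pmat d m (T.parent m)) * (∑ k ∈ T.delta (T.parent j) m, u k)
                 + ∑ k ∈ T.desc m, M.ptail T m (d m) k * u k) := by
          rw [hsum1, Finset.sum_insert hparne]
          congr 1
          · rw [Qmat_apply, if_neg hparnez, hwval _ hparmem]
            have : ∑ k ∈ T.delta (T.parent j) (T.parent m), u k
                = (∑ k ∈ T.delta (T.parent j) m, u k) - u m := by linarith [hdstep]
            rw [this]
          · rw [Finset.sum_congr rfl hwl]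
            calc ∑ l ∈ T.subtree m, M.Pmat d m l
                  * ((∑ k ∈ T.delta (T.parent j) m, u k) + ∑ k ∈ T.delta m l, u k)
                = ∑ l ∈ T.subtree m, (M.Pmat d m l * (∑ k ∈ T.delta (T.parent j) m, u k)
                    + M.Pmat d m l * (∑ k ∈ T.delta m l, u k)) :=
                  Finset.sum_congr rfl fun l _ => mul_add _ _ _
              _ = (∑ l ∈ T.subtree m, M.Pmat d m l) * (∑ k ∈ T.delta (T.parent j) m, u k)
                    + ∑ l ∈ T.subtree m, M.Pmat d m l * (∑ k ∈ T.delta m l, u k) := by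
                  rw [Finset.sum_add_distrib, Finset.sum_mul]
              _ = (1 - M.Pmat d m (T.parent m)) * (∑ k ∈ T.delta (T.parent j) m, u k)
                    + ∑ k ∈ T.desc m, M.ptail T m (d m) k * u k := by
                  rw [sum_subtree_eq T M hsf d hmroot, swap_sum T M d u m]
        rw [hwval m hms, hsum2]
        have hF1 := hF1m m hm
        have hpp : M.p m (d m) (T.parent m) = M.Pmat d m (T.parent m) := rfl
        have hum : passSum (M.Pmat d) m (T.parent m) (fun s => M.cvec d s - x) = u m := by
          rw [hudef]
        have hcc : M.c m (d m) - x = M.cvec d m - x := rfl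
        have huk : ∀ k, passSum (M.Pmat d) k (T.parent k) (fun s => M.cvec d s - x)
            = u k := fun k => by rw [hudef]
        rw [hpp, hum, hcc] at hF1
        rw [Finset.sum_congr rfl (fun k _ => by rw [huk k])] at hF1
        linarith [hF1]
      have huniq : ∀ m, v m = w m :=
        fixed_point_unique (fun s => M.cvec d s - x) hP0 hP1
          (pmat_irr M hrec d (T.parent j)) (T.desc j) v w
          (fun m _ => hvfix m) hwfix hagree
      have hF2 : ∀ m ∈ T.subtree j, v m = ∑ k ∈ T.delta (T.parent j) m, u k := by
        intro m hm
        rw [huniq m, hwval m hm]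
      constructor
      · intro m hm
        have := hF2 m hm
        rw [hvdef] at this
        rw [hudef] at this
        exact this
      · -- F1 for j itself
        have hvj := hvfix j
        have hsuppj : ∑ l, Qmat (M.Pmat d) (T.parent j) j l * v l
            = ∑ l ∈ T.subtree j, Qmat (M.Pmat d) (T.parent j) j l * v l := by
          refine (Finset.sum_subset (Finset.subset_univ _) fun l _ hl => ?_).symm
          have hQ : Qmat (M.Pmat d) (T.parent j) j l = 0 := by
            rw [Qmat_apply]
            split
            · rfl
            · rename_i hlz
              by_contra hPl
              rcases hsf j hj (d j) l hPl with h | h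
              · exact hlz h
              · exact hl h
          rw [hQ, zero_mul]
        have hvl : ∀ l ∈ T.subtree j, Qmat (M.Pmat d) (T.parent j) j l * v l
            = M.Pmat d j l * (u j + ∑ k ∈ T.delta j l, u k) := by
          intro l hl
          have hlz : l ≠ T.parent j := fun h => hznot (h ▸ hl)
          rw [Qmat_apply, if_neg hlz, hF2 l hl,
            T.delta_union hj (T.mem_subtree_self j) hl,
            Finset.sum_union (T.delta_disjoint hj (T.mem_subtree_self j)),
            T.delta_parent_self' hj, Finset.sum_singleton]
        have hsum3 : ∑ l, Qmat (M.Pmat d) (T.parent j) j l * v l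
            = (1 - M.Pmat d j (T.parent j)) * u j
              + ∑ k ∈ T.desc j, M.ptail T j (d j) k * u k := by
          rw [hsuppj, Finset.sum_congr rfl hvl]
          calc ∑ l ∈ T.subtree j, M.Pmat d j l * (u j + ∑ k ∈ T.delta j l, u k)
              = ∑ l ∈ T.subtree j, (M.Pmat d j l * u j
                  + M.Pmat d j l * (∑ k ∈ T.delta j l, u k)) :=
                Finset.sum_congr rfl fun l _ => mul_add _ _ _
            _ = (∑ l ∈ T.subtree j, M.Pmat d j l) * u j
                  + ∑ l ∈ T.subtree j, M.Pmat d j l * (∑ k ∈ T.delta j l, u k) := by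
                rw [Finset.sum_add_distrib, Finset.sum_mul]
            _ = (1 - M.Pmat d j (T.parent j)) * u j
                  + ∑ k ∈ T.desc j, M.ptail T j (d j) k * u k := by
                rw [sum_subtree_eq T M hsf d hj, swap_sum T M d u j]
        rw [hsum3] at hvj
        have hpp : M.p j (d j) (T.parent j) = M.Pmat d j (T.parent j) := rfl
        have huj : passSum (M.Pmat d) j (T.parent j) (fun s => M.cvec d s - x) = u j := by
          rw [hudef]
        have hcc : M.c j (d j) - x = M.cvec d j - x := rfl
        have huk : ∀ k, passSum (M.Pmat d) k (T.parent k) (fun s => M.cvec d s - x)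
            = u k := fun k => by rw [hudef]
        rw [hpp, huj, hcc, Finset.sum_congr rfl (fun k _ => by rw [huk k])]
        rw [huj] at hvj
        linarith [hvj]

end MainLemmas

/-- for a finite recurrent skip-free MDP on a tree and fixed `x`, if
`y` satisfies the downward recursion (minimising over actions, attained by `aSel`), then
`y i` is a lower bound on the expected `x`-revised first-passage cost from `i` to its parent
under any policy, is attained by any policy agreeing with `aSel` off the root, and the
minimal expected `x`-revised cost until first passage from `i` to the root equals
`∑_{k ∈ Δ(root,i)} y k`. -/
theorem stmt4 {S A : Type*} [Fintype S] [DecidableEq S] [Fintype A] [Nonempty A]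
    (T : SFTree S) (M : MDP S A)
    (hsf : M.IsSkipFree T) (hrec : IsRecurrentModel M)
    (h00 : ∀ a : A, M.p T.root a T.root < 1)
    (hpar : ∀ i, i ≠ T.root → ∀ a : A, 0 < M.p i a (T.parent i))
    (x : ℝ) (y : S → ℝ) (aSel : S → A)
    (hy : ∀ i, i ≠ T.root →
      y i = ⨅ a : A, (M.c i a - x + ∑ k ∈ T.desc i, M.ptail T i a k * y k)
          / M.p i a (T.parent i))
    (ha : ∀ i, i ≠ T.root →
      (M.c i (aSel i) - x + ∑ k ∈ T.desc i, M.ptail T i (aSel i) k * y k)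
          / M.p i (aSel i) (T.parent i) = y i) :
    (∀ d' : S → A, ∀ i, i ≠ T.root →
        y i ≤ passSum (M.Pmat d') i (T.parent i) (fun s => M.cvec d' s - x))
    ∧ (∀ d : S → A, (∀ i, i ≠ T.root → d i = aSel i) →
        ∀ i, i ≠ T.root →
          passSum (M.Pmat d) i (T.parent i) (fun s => M.cvec d s - x) = y i)
    ∧ (∀ i, i ≠ T.root →
        (⨅ d' : S → A, passSum (M.Pmat d') i T.root (fun s => M.cvec d' s - x))
          = ∑ k ∈ T.delta T.root i, y k) := by
  classical
  have hF1 : ∀ (d : S → A) (j : S), j ≠ T.root →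
      passSum (M.Pmat d) j (T.parent j) (fun s => M.cvec d s - x)
        = ((M.c j (d j) - x) + ∑ k ∈ T.desc j, M.ptail T j (d j) k
            * passSum (M.Pmat d) k (T.parent k) (fun s => M.cvec d s - x))
          / M.p j (d j) (T.parent j) := by
    intro d j hj
    have h := (F12 T M hsf hrec x d (T.subtree j).card j (le_refl _) hj).2
    have hp : 0 < M.p j (d j) (T.parent j) := hpar j hj (d j)
    rw [eq_div_iff hp.ne']
    linarith [h]
  have hptail0 : ∀ (i : S) (a : A) (k : S), 0 ≤ M.ptail T i a k := fun i a k =>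
    Finset.sum_nonneg fun s _ => M.p_nonneg i a s
  have part1 : ∀ d' : S → A, ∀ i, i ≠ T.root →
      y i ≤ passSum (M.Pmat d') i (T.parent i) (fun s => M.cvec d' s - x) := by
    intro d'
    have key : ∀ (n : ℕ) (j : S), (T.subtree j).card ≤ n → j ≠ T.root →
        y j ≤ passSum (M.Pmat d') j (T.parent j) (fun s => M.cvec d' s - x) := by
      intro n
      induction n with
      | zero =>
          intro j hc hj
          exfalso; have := Finset.card_pos.2 ⟨j, T.mem_subtree_self j⟩; omega
      | succ n ih =>
          intro j hc hj
          have hIH : ∀ k ∈ T.desc j, y k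
              ≤ passSum (M.Pmat d') k (T.parent k) (fun s => M.cvec d' s - x) := by
            intro k hk
            have hklt := T.desc_card_lt hk
            have hkroot : k ≠ T.root := by
              obtain ⟨hne, nn, hn⟩ := (T.mem_desc).1 hk
              exact T.ne_root_of_mem_subtree hj ((T.mem_subtree).2 ⟨nn, hn⟩)
            exact ih k (by omega) hkroot
          rw [hF1 d' j hj, hy j hj]
          have hbdd : BddBelow (Set.range fun a : A =>
              (M.c j a - x + ∑ k ∈ T.desc j, M.ptail T j a k * y k)
                / M.p j a (T.parent j)) :=
            Set.Finite.bddBelow (Set.finite_range _)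
          refine le_trans (ciInf_le hbdd (d' j)) ?_
          have hp : 0 < M.p j (d' j) (T.parent j) := hpar j hj (d' j)
          have hnum : M.c j (d' j) - x + ∑ k ∈ T.desc j, M.ptail T j (d' j) k * y k
              ≤ M.c j (d' j) - x + ∑ k ∈ T.desc j, M.ptail T j (d' j) k
                  * passSum (M.Pmat d') k (T.parent k) (fun s => M.cvec d' s - x) := by
            refine add_le_add_right (Finset.sum_le_sum fun k hk => ?_) _
            exact mul_le_mul_of_nonneg_left (hIH k hk) (hptail0 j (d' j) k)
          exact div_le_div_of_nonneg_right hnum hp.le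
    intro i hi
    exact key (T.subtree i).card i (le_refl _) hi
  have part2 : ∀ d : S → A, (∀ i, i ≠ T.root → d i = aSel i) → ∀ i, i ≠ T.root →
      passSum (M.Pmat d) i (T.parent i) (fun s => M.cvec d s - x) = y i := by
    intro d hd
    have key : ∀ (n : ℕ) (j : S), (T.subtree j).card ≤ n → j ≠ T.root →
        passSum (M.Pmat d) j (T.parent j) (fun s => M.cvec d s - x) = y j := by
      intro n
      induction n with
      | zero =>
          intro j hc hj
          exfalso; have := Finset.card_pos.2 ⟨j, T.mem_subtree_self j⟩; omega
      | succ n ih =>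
          intro j hc hj
          have hIH : ∀ k ∈ T.desc j,
              passSum (M.Pmat d) k (T.parent k) (fun s => M.cvec d s - x) = y k := by
            intro k hk
            have hklt := T.desc_card_lt hk
            have hkroot : k ≠ T.root := by
              obtain ⟨hne2, nn, hn⟩ := (T.mem_desc).1 hk
              exact T.ne_root_of_mem_subtree hj ((T.mem_subtree).2 ⟨nn, hn⟩)
            exact ih k (by omega) hkroot
          rw [hF1 d j hj, hd j hj,
            Finset.sum_congr rfl (fun k hk => by rw [hIH k hk])]
          exact ha j hj
    intro i hi
    exact key (T.subtree i).card i (le_refl _) hi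
  refine ⟨part1, part2, ?_⟩
  intro i hi
  obtain ⟨t, htroot, hpt, hit⟩ := T.exists_root_child hi
  have hdecomp : ∀ d' : S → A,
      passSum (M.Pmat d') i T.root (fun s => M.cvec d' s - x)
        = ∑ k ∈ T.delta T.root i,
            passSum (M.Pmat d') k (T.parent k) (fun s => M.cvec d' s - x) := by
    intro d'
    have h := (F12 T M hsf hrec x d' (T.subtree t).card t (le_refl _) htroot).1 i hit
    rwa [hpt] at h
  have hne : ∀ k ∈ T.delta T.root i, k ≠ T.root := by
    intro k hk; exact ((T.mem_delta).1 hk).1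
  apply le_antisymm
  · have heq : passSum (M.Pmat aSel) i T.root (fun s => M.cvec aSel s - x)
        = ∑ k ∈ T.delta T.root i, y k := by
      rw [hdecomp aSel]
      exact Finset.sum_congr rfl fun k hk =>
        part2 aSel (fun _ _ => rfl) k (hne k hk)
    exact le_trans (ciInf_le (Set.Finite.bddBelow (Set.finite_range _)) aSel)
      (le_of_eq heq)
  · refine le_ciInf fun d' => ?_
    rw [hdecomp d']
    exact Finset.sum_le_sum fun k hk => part1 d' k (hne k hk)
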